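/- On the bicrossproduct H = kM ⋉ k(G), the map (s⊗δ_u)* = s^i ⊗ δ_{s▷u} preserves the comultiplication: Δ((s⊗δ_u)*) = (Δ(s⊗δ_u))* (where * acts factorwise on H⊗H). -/

import Mathlib

/-- Data of an almost group: a binary operation, an `i` operation, and a subset `J`. -/
structure AlmostGroupData (G : Type*) where
  mul : G → G → G
  inv : G → G
  J : Set G

/-- The axioms of an almost group (Definition 2.1). -/
structure IsAlmostGroup {G : Type*} (D : AlmostGroupData G) : Prop where
  mul_assoc : ∀ a b c, D.mul (D.mul a b) c = D.mul a (D.mul b c)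
  inv_bijective : Function.Bijective D.inv
  J_mul_closed : ∀ a ∈ D.J, ∀ b ∈ D.J, D.mul a b ∈ D.J
  J_inv_closed : ∀ a ∈ D.J, D.inv a ∈ D.J
  inv_mul : ∀ a b, D.inv (D.mul a b) = D.mul (D.inv b) (D.inv a)
  J_central : ∀ j ∈ D.J, ∀ g, D.mul j g = D.mul g j
  mul_inv_comm : ∀ g, D.mul g (D.inv g) = D.mul (D.inv g) g
  mul_inv_mem : ∀ g, D.mul g (D.inv g) ∈ D.J
  inv_inv : ∀ g, D.inv (D.inv g) = g

/-- Data of a matched pair of almost groups: two almost groups and two actions. -/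
structure MatchedPairData (G M : Type*) where
  DG : AlmostGroupData G
  DM : AlmostGroupData M
  act : M → G → G      -- ▷ : M × G → G
  coact : M → G → M    -- ◁ : M × G → M

/-- The axioms of a matched pair of almost groups (Definition 4.1). -/
structure IsMatchedPair {G M : Type*} (P : MatchedPairData G M) : Prop where
  almostGroup_G : IsAlmostGroup P.DG
  almostGroup_M : IsAlmostGroup P.DM
  coact_mul : ∀ s u v, P.coact s (P.DG.mul u v) = P.coact (P.coact s u) v
  mul_coact : ∀ s t u, P.coact (P.DM.mul s t) u =
      P.DM.mul (P.coact s (P.act t u)) (P.coact t u)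
  mul_act : ∀ s t u, P.act (P.DM.mul s t) u = P.act s (P.act t u)
  act_mul : ∀ s u v, P.act s (P.DG.mul u v) =
      P.DG.mul (P.act s u) (P.act (P.coact s u) v)
  inv_act : ∀ s u, P.act (P.DM.inv (P.coact s u)) (P.DG.inv (P.act s u)) = P.DG.inv u
  inv_coact : ∀ s u, P.coact (P.DM.inv (P.coact s u)) (P.DG.inv (P.act s u)) = P.DM.inv s
  actJM : ∀ j ∈ P.DM.J, ∀ u, P.act j u = u
  coactJM : ∀ j ∈ P.DM.J, ∀ u, P.coact j u = j
  actJG : ∀ s, ∀ j ∈ P.DG.J, P.act s j = j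
  coactJG : ∀ s, ∀ j ∈ P.DG.J, P.coact s j = s

variable {G M k : Type*} [Fintype G] [Fintype M] [DecidableEq G] [DecidableEq M] [Field k]
variable (P : MatchedPairData G M)

/-- The product of `H = kM ⋉ k(G)`, given on the basis by
`(s ⊗ δ_u)(t ⊗ δ_v) = δ_{u, t ▷ v} (st ⊗ δ_v)`.  Here `H` is modelled as `M × G → k`,
with `(s, u)` indexing the basis vector `s ⊗ δ_u`. -/
def mulH (F K : M × G → k) : M × G → k := fun p =>
  ∑ s : M, ∑ t : M, if P.DM.mul s t = p.1 then F (s, P.act t p.2) * K (t, p.2) else 0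

/-- The coproduct of `H = kM ⋉ k(G)`, given on the basis by
`Δ(s ⊗ δ_u) = Σ_{xy=u} (s ⊗ δ_x) ⊗ ((s ◁ x) ⊗ δ_y)`.  `H ⊗ H` is modelled as
`(M × G) × (M × G) → k`. -/
def DeltaH (F : M × G → k) : (M × G) × (M × G) → k := fun q =>
  if q.2.1 = P.coact q.1.1 q.1.2 then F (q.1.1, P.DG.mul q.1.2 q.2.2) else 0

/-- The `*` operation on basis elements: `(s ⊗ δ_u)* = s^i ⊗ δ_{s ▷ u}`;
this map is an involution of `M × G`. -/
def bstar (b : M × G) : M × G := (P.DM.inv b.1, P.act b.1 b.2)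

/-- The conjugate-linear `*` operation on `H = kM ⋉ k(G)`. -/
def starH [StarRing k] (F : M × G → k) : M × G → k := fun p => star (F (bstar P p))

/-- The factorwise `*` operation on `H ⊗ H`. -/
def starHH [StarRing k] (Phi : (M × G) × (M × G) → k) : (M × G) × (M × G) → k :=
  fun q => star (Phi (bstar P q.1, bstar P q.2))

/-- On the bicrossproduct `H = kM ⋉ k(G)`, the map `(s ⊗ δ_u)* = s^i ⊗ δ_{s ▷ u}`
preserves the comultiplication: `Δ(F*) = (Δ F)*`, where `*` acts factorwise on
`H ⊗ H`. -/
theorem bicross_star_comultiplicative [StarRing k] (hP : IsMatchedPair P)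
    (F : M × G → k) :
    DeltaH P (starH P F) = starHH P (DeltaH P F) := by
  have hG := hP.almostGroup_G
  have hM := hP.almostGroup_M
  -- `act (inv s)` is a left inverse of `act s`
  have actinv : ∀ s u, P.act (P.DM.inv s) (P.act s u) = u := by
    intro s u
    rw [← hP.mul_act]
    exact hP.actJM _ (by rw [← hM.mul_inv_comm]; exact hM.mul_inv_mem s) u
  -- inv on M is injective
  have invinj : Function.Injective P.DM.inv := by
    intro a b h
    have := congrArg P.DM.inv h
    rwa [hM.inv_inv, hM.inv_inv] at this
  -- key identity : coact (inv s) (act s x) = inv (coact s x)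
  have key : ∀ s x, P.coact (P.DM.inv s) (P.act s x) = P.DM.inv (P.coact s x) := by
    intro s x
    have h5 : P.coact (P.coact (P.DM.inv s) (P.act s x)) (P.DG.inv (P.act s x))
        = P.DM.inv s := by
      rw [← hP.coact_mul, hP.coactJG _ _ (hG.mul_inv_mem (P.act s x))]
    have h6 := hP.inv_coact (P.coact (P.DM.inv s) (P.act s x)) (P.DG.inv (P.act s x))
    have h7 := hP.inv_act (P.coact (P.DM.inv s) (P.act s x)) (P.DG.inv (P.act s x))
    rw [h5, hM.inv_inv] at h6
    rw [h5, hM.inv_inv, hG.inv_inv] at h7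
    -- h6 : coact s B = inv (coact (inv s) (act s x)),  h7 : act s B = act s x
    have h8 := congrArg (P.act (P.DM.inv s)) h7
    rw [actinv, actinv] at h8
    rw [h8] at h6
    exact invinj (by rw [← h6, hM.inv_inv])
  funext q
  obtain ⟨⟨s, x⟩, y1, y⟩ := q
  unfold DeltaH starH starHH bstar
  simp only []
  by_cases h : y1 = P.coact s x
  · rw [if_pos h, if_pos (by rw [h, key]), h, hP.act_mul]
  · rw [if_neg h, if_neg (fun hc => h (invinj (by rw [hc, key]))), star_zero]
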